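/- (Stochastic Gronwall with zero drift.) Let (X_t) be an adapted process on a filtered probability space satisfying X_{t+1} = X_t + ξ_{t+1} + Z_{t+1}, X₀ = x₀, where (ξ_t) is adapted and (Z_t) is a martingale difference sequence. Let T ∈ ℕ and δ ∈ (0,1), and set M := T Ξ + √(T σ² / δ). Suppose there exist δ_ξ ∈ (0,1) and Ξ, σ > 0 such that for every t ≤ T, on the event { |X_s − x₀| ≤ M for all s ≤ t }: P( |ξ_{t+1}| > Ξ | F_t ) ≤ δ_ξ and E[Z_{t+1}² | F_t] ≤ σ². Then P( sup_{t≤T} |X_t − x₀| ≤ M ) ≥ 1 − T δ_ξ − δ. -/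

import Mathlib

open MeasureTheory

noncomputable section

lemma mul_int_of_L2 {Ω : Type*} {m0 : MeasurableSpace Ω} {μ : Measure Ω}
    {f g : Ω → ℝ} (hf : MemLp f 2 μ) (hg : MemLp g 2 μ) :
    Integrable (fun ω => f ω * g ω) μ := by
  have h12 : (1 : ENNReal) / 1 = 1 / 2 + 1 / 2 := by
    rw [ENNReal.div_add_div_same, one_add_one_eq_two, one_div_one,
      ENNReal.div_self (by norm_num) (by norm_num)]
  have h := hg.smul (E := ℝ) (𝕜 := ℝ) hf (r := 1)
  exact memLp_one_iff_integrable.mp h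

/-- stochastic Gronwall lemma with zero drift.
Let `X_{t+1} = X_t + ξ_{t+1} + Z_{t+1}` with `X₀ = x₀`, `(ξ_t)` adapted, `(Z_t)` a
martingale difference sequence, and set `M = TΞ + √(Tσ²/δ)`. Assume that on the event
`{|X_s − x₀| ≤ M for all s ≤ t}` the conditional probability that `|ξ_{t+1}| > Ξ` is at
most `δ_ξ` and the conditional variance of `Z_{t+1}` is at most `σ²`. Then
`P( sup_{t≤T} |X_t − x₀| ≤ M ) ≥ 1 − T δ_ξ − δ`. -/
theorem stochastic_gronwall_zero_drift {Ω : Type*} {m0 : MeasurableSpace Ω}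
    (μ : Measure Ω) [IsProbabilityMeasure μ] (F : Filtration ℕ m0)
    (x₀ : ℝ) (X ξ Z : ℕ → Ω → ℝ)
    (hXadapted : StronglyAdapted F X) (hξadapted : StronglyAdapted F ξ) (hZadapted : StronglyAdapted F Z)
    (hZL2 : ∀ t, MemLp (Z t) 2 μ)
    (hmds : ∀ t, μ[Z (t + 1)|F t] =ᵐ[μ] 0)
    (hX0 : ∀ ω, X 0 ω = x₀)
    (hrec : ∀ t ω, X (t + 1) ω = X t ω + ξ (t + 1) ω + Z (t + 1) ω)
    (T : ℕ) (δ : ℝ) (hδ : δ ∈ Set.Ioo (0 : ℝ) 1)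
    (δξ : ℝ) (hδξ : δξ ∈ Set.Ioo (0 : ℝ) 1)
    (Ξ σ : ℝ) (hΞ : 0 < Ξ) (hσ : 0 < σ)
    (M : ℝ) (hM : M = T * Ξ + Real.sqrt (T * σ ^ 2 / δ))
    (hξbound : ∀ t, t ≤ T → ∀ᵐ ω ∂μ,
      (∀ s ≤ t, |X s ω - x₀| ≤ M) →
      (μ[Set.indicator {ω' | Ξ < |ξ (t + 1) ω'|} (fun _ => (1 : ℝ))|F t]) ω ≤ δξ)
    (hvar : ∀ t, t ≤ T → ∀ᵐ ω ∂μ,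
      (∀ s ≤ t, |X s ω - x₀| ≤ M) →
      (μ[fun ω' => (Z (t + 1) ω') ^ 2|F t]) ω ≤ σ ^ 2) :
    ENNReal.ofReal (1 - T * δξ - δ)
      ≤ μ {ω | ∀ t ≤ T, |X t ω - x₀| ≤ M} := by
  obtain ⟨hδ0, hδ1⟩ := hδ
  obtain ⟨hδξ0, hδξ1⟩ := hδξ
  -- the exceedance level
  set lam : ℝ := Real.sqrt (T * σ ^ 2 / δ) with hlam
  have hlam0 : 0 ≤ lam := Real.sqrt_nonneg _
  have hM0 : 0 ≤ M := by
    rw [hM]; positivity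
  -- the "good up to time t" events
  set G : ℕ → Set Ω := fun t => {ω | ∀ s ≤ t, |X s ω - x₀| ≤ M} with hG
  -- measurability of G
  have hGmeas : ∀ t, MeasurableSet[F t] (G t) := by
    intro t
    have : G t = ⋂ s ∈ Set.Iic t, {ω | |X s ω - x₀| ≤ M} := by
      ext ω; simp [hG, Set.mem_iInter]
    rw [this]
    refine MeasurableSet.biInter (Set.to_countable _) fun s hs => ?_
    have hXm : Measurable[F t] (X s) :=
      ((hXadapted s).mono (F.mono hs)).measurable
    have h2' : Measurable[F t] fun ω => X s ω - x₀ := hXm.sub (by exact measurable_const)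
    have hset : {ω | |X s ω - x₀| ≤ M} = (fun ω => X s ω - x₀) ⁻¹' (Set.Icc (-M) M) := by
      ext ω; simp [abs_le, and_comm]
    rw [hset]
    exact h2' measurableSet_Icc
  have hGm0 : ∀ t, MeasurableSet (G t) := fun t => F.le t _ (hGmeas t)
  -- the stopped martingale
  set Y : ℕ → Ω → ℝ := fun t ω => ∑ s ∈ Finset.range t, (G s).indicator (Z (s + 1)) ω
    with hYdef
  have hYmeas : ∀ t, StronglyMeasurable[F t] (Y t) := by
    intro t
    apply Finset.stronglyMeasurable_fun_sum
    intro s hs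
    rw [Finset.mem_range] at hs
    exact ((hZadapted (s + 1)).mono (F.mono hs)).indicator
      ((F.mono (Nat.le_of_lt hs)) _ (hGmeas s))
  have hYL2 : ∀ t, MemLp (Y t) 2 μ := by
    intro t
    have h1 : MemLp (∑ s ∈ Finset.range t, (G s).indicator (Z (s + 1))) 2 μ :=
      memLp_finset_sum' _ fun s _ => ((hZL2 (s + 1)).indicator (hGm0 s))
    have h2 : (∑ s ∈ Finset.range t, (G s).indicator (Z (s + 1))) = Y t := by
      ext ω; simp [hYdef]
    rwa [h2] at h1
  have hZsqint : ∀ t, Integrable (fun ω => (Z (t + 1) ω) ^ 2) μ :=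
    fun t => (hZL2 (t + 1)).integrable_sq
  -- energy estimate
  have hYbound : ∀ t, t ≤ T → ∫ ω, (Y t ω) ^ 2 ∂μ ≤ t * σ ^ 2 := by
    intro t
    induction t with
    | zero =>
      intro _
      have hY0 : ∀ ω, Y 0 ω = 0 := by intro ω; simp [hYdef]
      simp [hY0]
    | succ t ih =>
      intro ht1
      have ht : t ≤ T := Nat.le_of_succ_le ht1
      set W : Ω → ℝ := (G t).indicator (Z (t + 1)) with hW
      have hWL2 : MemLp W 2 μ := (hZL2 (t + 1)).indicator (hGm0 t)
      have hsplit : ∀ ω, Y (t + 1) ω = Y t ω + W ω := by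
        intro ω; simp [hYdef, Finset.sum_range_succ, hW]
      have hint1 : Integrable (fun ω => (Y t ω) ^ 2) μ := (hYL2 t).integrable_sq
      have hint2 : Integrable (fun ω => Y t ω * W ω) μ := mul_int_of_L2 (hYL2 t) hWL2
      have hint3 : Integrable (fun ω => (W ω) ^ 2) μ := hWL2.integrable_sq
      have hZint : Integrable (Z (t + 1)) μ := (hZL2 (t + 1)).integrable one_le_two
      -- cross term vanishes
      have hcross : ∫ ω, Y t ω * W ω ∂μ = 0 := by
        set V : Ω → ℝ := (G t).indicator (Y t) with hV
        have hVZ : ∀ ω, Y t ω * W ω = (V * Z (t + 1)) ω := by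
          intro ω
          by_cases h : ω ∈ G t
          · simp [hW, hV, Set.indicator_of_mem h]
          · simp [hW, hV, Set.indicator_of_notMem h]
        have hVsm : StronglyMeasurable[F t] V := (hYmeas t).indicator (hGmeas t)
        have hVL2 : MemLp V 2 μ := (hYL2 t).indicator (hGm0 t)
        have hVZint : Integrable (V * Z (t + 1)) μ := mul_int_of_L2 hVL2 (hZL2 (t + 1))
        have h1 := condExp_mul_of_stronglyMeasurable_left hVsm hVZint hZint
        have h2 : μ[V * Z (t + 1)|F t] =ᵐ[μ] 0 := by
          refine h1.trans ?_
          filter_upwards [hmds t] with ω hω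
          simp only [Pi.mul_apply, hω, Pi.zero_apply, mul_zero]
        calc ∫ ω, Y t ω * W ω ∂μ = ∫ ω, (V * Z (t + 1)) ω ∂μ :=
              integral_congr_ae (Filter.Eventually.of_forall hVZ)
          _ = ∫ ω, (μ[V * Z (t + 1)|F t]) ω ∂μ := (integral_condExp (F.le t)).symm
          _ = 0 := by rw [integral_congr_ae h2]; simp
      -- variance term
      have hWsq : ∫ ω, (W ω) ^ 2 ∂μ ≤ σ ^ 2 := by
        have hWsq' : ∀ ω, (W ω) ^ 2 = (G t).indicator (fun ω' => (Z (t + 1) ω') ^ 2) ω := by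
          intro ω; by_cases h : ω ∈ G t <;>
            simp [hW, Set.indicator_of_mem, Set.indicator_of_notMem, h]
        have h1 : ∫ ω, (W ω) ^ 2 ∂μ = ∫ ω in G t, (Z (t + 1) ω) ^ 2 ∂μ := by
          rw [integral_congr_ae (Filter.Eventually.of_forall hWsq'),
            integral_indicator (hGm0 t)]
        have h2 : ∫ ω in G t, (Z (t + 1) ω) ^ 2 ∂μ
            = ∫ ω in G t, (μ[fun ω' => (Z (t + 1) ω') ^ 2|F t]) ω ∂μ :=
          (setIntegral_condExp (F.le t) (hZsqint t) (hGmeas t)).symm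
        have h3 : ∫ ω in G t, (μ[fun ω' => (Z (t + 1) ω') ^ 2|F t]) ω ∂μ
            ≤ ∫ ω in G t, σ ^ 2 ∂μ := by
          refine integral_mono_ae integrable_condExp.integrableOn
            (integrable_const _).integrableOn ?_
          rw [Filter.EventuallyLE, ae_restrict_iff' (hGm0 t)]
          filter_upwards [hvar t ht] with ω hω hmem
          exact hω hmem
        have h4 : ∫ ω in G t, (σ : ℝ) ^ 2 ∂μ ≤ σ ^ 2 := by
          rw [setIntegral_const]
          have hle1 : (μ (G t)).toReal ≤ 1 := by
            rw [← ENNReal.toReal_one]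
            exact ENNReal.toReal_mono ENNReal.one_ne_top prob_le_one
          rw [smul_eq_mul, measureReal_def]
          nlinarith [sq_nonneg σ]
        rw [h1, h2]
        exact h3.trans h4
      -- combine
      have hexp : ∫ ω, (Y (t + 1) ω) ^ 2 ∂μ
          = ∫ ω, (Y t ω) ^ 2 ∂μ + (2 * ∫ ω, Y t ω * W ω ∂μ + ∫ ω, (W ω) ^ 2 ∂μ) := by
        have hfeq : (fun ω => (Y (t + 1) ω) ^ 2)
            = fun ω => (Y t ω) ^ 2 + (2 * (Y t ω * W ω) + (W ω) ^ 2) :=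
          funext fun ω => by rw [hsplit ω]; ring
        have hint4 : Integrable (fun ω => 2 * (Y t ω * W ω) + (W ω) ^ 2) μ :=
          (hint2.const_mul 2).add hint3
        have hint5 : Integrable (fun ω => 2 * (Y t ω * W ω)) μ := hint2.const_mul 2
        rw [hfeq, integral_add hint1 hint4, integral_add hint5 hint3, integral_const_mul]
      rw [hexp, hcross]
      have hihb := ih ht
      push_cast
      nlinarith [hihb]
  -- the bad-jump events
  set Bad : ℕ → Set Ω := fun t => {ω | Ξ < |ξ (t + 1) ω|} with hBad
  have hBadm0 : ∀ t, MeasurableSet (Bad t) := by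
    intro t
    have hξm : Measurable (ξ (t + 1)) := ((hξadapted (t + 1)).mono (F.le _)).measurable
    have hset : Bad t = (fun ω => ξ (t + 1) ω) ⁻¹' (Set.Iio (-Ξ) ∪ Set.Ioi Ξ) := by
      ext ω; simp [hBad, lt_abs, lt_neg, or_comm]
    rw [hset]
    exact hξm (measurableSet_Iio.union measurableSet_Ioi)
  -- bound for each bad-jump event
  have hBbound : ∀ t, t < T → μ (G t ∩ Bad t) ≤ ENNReal.ofReal δξ := by
    intro t htT
    have ht : t ≤ T := le_of_lt htT
    have hIind : Integrable (Set.indicator {ω' | Ξ < |ξ (t + 1) ω'|} (fun _ => (1 : ℝ))) μ :=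
      (integrable_const (1 : ℝ)).indicator (hBadm0 t)
    have key : (μ (G t ∩ Bad t)).toReal ≤ δξ := by
      have h0 : ∫ ω in G t, Set.indicator {ω' | Ξ < |ξ (t + 1) ω'|} (fun _ => (1 : ℝ)) ω ∂μ
          = (μ (G t ∩ Bad t)).toReal := by
        rw [setIntegral_indicator (hBadm0 t), setIntegral_const, smul_eq_mul, mul_one, measureReal_def]
      have h1 : ∫ ω in G t, Set.indicator {ω' | Ξ < |ξ (t + 1) ω'|} (fun _ => (1 : ℝ)) ω ∂μ
          = ∫ ω in G t,
              (μ[Set.indicator {ω' | Ξ < |ξ (t + 1) ω'|} (fun _ => (1 : ℝ))|F t]) ω ∂μ :=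
        (setIntegral_condExp (F.le t) hIind (hGmeas t)).symm
      have h2 : ∫ ω in G t,
            (μ[Set.indicator {ω' | Ξ < |ξ (t + 1) ω'|} (fun _ => (1 : ℝ))|F t]) ω ∂μ
          ≤ ∫ ω in G t, δξ ∂μ := by
        refine integral_mono_ae integrable_condExp.integrableOn
          (integrable_const _).integrableOn ?_
        rw [Filter.EventuallyLE, ae_restrict_iff' (hGm0 t)]
        filter_upwards [hξbound t ht] with ω hω hmem
        exact hω hmem
      have h3 : ∫ ω in G t, δξ ∂μ ≤ δξ := by
        rw [setIntegral_const, smul_eq_mul, measureReal_def]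
        have hle1 : (μ (G t)).toReal ≤ 1 := by
          rw [← ENNReal.toReal_one]
          exact ENNReal.toReal_mono ENNReal.one_ne_top prob_le_one
        nlinarith
      rw [← h0, h1]
      exact h2.trans h3
    calc μ (G t ∩ Bad t) = ENNReal.ofReal (μ (G t ∩ Bad t)).toReal :=
          (ENNReal.ofReal_toReal (measure_ne_top μ _)).symm
      _ ≤ ENNReal.ofReal δξ := ENNReal.ofReal_le_ofReal key
  -- telescoping identity
  have htel : ∀ ω n, X n ω - x₀ = ∑ s ∈ Finset.range n, (ξ (s + 1) ω + Z (s + 1) ω) := by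
    intro ω n
    induction n with
    | zero => simp [hX0]
    | succ n ihn => rw [Finset.sum_range_succ, ← ihn, hrec]; ring
  -- dispose of the trivial case T = 0
  rcases Nat.eq_zero_or_pos T with hT0 | hTpos
  · subst hT0
    have hluniv : {ω | ∀ t ≤ 0, |X t ω - x₀| ≤ M} = Set.univ := by
      ext ω
      simp only [Set.mem_univ, iff_true, Set.mem_setOf_eq, Nat.le_zero]
      rintro t rfl
      simp [hX0, hM0]
    rw [hluniv, measure_univ]
    exact ENNReal.ofReal_le_one.mpr (by push_cast; nlinarith)
  -- Chebyshev for the stopped martingale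
  have hTσ : 0 < (T : ℝ) * σ ^ 2 / δ := by
    have hT0 : (0 : ℝ) < T := by exact_mod_cast hTpos
    positivity
  have hlampos : 0 < lam := Real.sqrt_pos.mpr hTσ
  have hlamsq : lam ^ 2 = (T : ℝ) * σ ^ 2 / δ := Real.sq_sqrt (le_of_lt hTσ)
  set A' : Set Ω := {ω | lam ≤ |Y T ω|} with hA'
  have hA'm : MeasurableSet A' := by
    have hYm : Measurable (Y T) := ((hYmeas T).mono (F.le T)).measurable
    have hset : A' = (Y T) ⁻¹' (Set.Iic (-lam) ∪ Set.Ici lam) := by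
      ext ω; simp [hA', le_abs, le_neg, or_comm]
    rw [hset]
    exact hYm (measurableSet_Iic.union measurableSet_Ici)
  have hCheb : μ A' ≤ ENNReal.ofReal δ := by
    have h0 : ∫ ω in A', (fun _ => lam ^ 2) ω ∂μ = (μ A').toReal * lam ^ 2 := by
      rw [setIntegral_const, smul_eq_mul, measureReal_def]
    have h1 : ∫ ω in A', (fun _ => lam ^ 2) ω ∂μ ≤ ∫ ω in A', (Y T ω) ^ 2 ∂μ := by
      refine setIntegral_mono_on (integrable_const _).integrableOn
        ((hYL2 T).integrable_sq).integrableOn hA'm ?_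
      intro ω hω
      have h2 : lam ^ 2 ≤ |Y T ω| ^ 2 := pow_le_pow_left₀ hlam0 hω 2
      rwa [sq_abs] at h2
    have h2 : ∫ ω in A', (Y T ω) ^ 2 ∂μ ≤ ∫ ω, (Y T ω) ^ 2 ∂μ :=
      setIntegral_le_integral ((hYL2 T).integrable_sq)
        (Filter.Eventually.of_forall fun ω => sq_nonneg _)
    have hkey : (μ A').toReal * lam ^ 2 ≤ (T : ℝ) * σ ^ 2 := by
      rw [← h0]
      exact (h1.trans h2).trans (hYbound T le_rfl)
    have hto : (μ A').toReal ≤ δ := by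
      have hlam2pos : 0 < lam ^ 2 := by positivity
      have heq : lam ^ 2 * δ = (T : ℝ) * σ ^ 2 := by
        rw [hlamsq]; field_simp
      nlinarith [hkey, heq, hlam2pos]
    calc μ A' = ENNReal.ofReal (μ A').toReal :=
          (ENNReal.ofReal_toReal (measure_ne_top μ _)).symm
      _ ≤ ENNReal.ofReal δ := ENNReal.ofReal_le_ofReal hto
  -- the inclusion of the complement event
  classical
  have hincl : (G T)ᶜ ⊆ (⋃ t ∈ Finset.range T, (G t ∩ Bad t)) ∪ A' := by
    intro ω hω
    by_cases hB' : ω ∈ ⋃ t ∈ Finset.range T, (G t ∩ Bad t)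
    · exact Or.inl hB'
    right
    have hexists : ∃ u, u ≤ T ∧ M < |X u ω - x₀| := by
      have hω' : ¬(∀ s ≤ T, |X s ω - x₀| ≤ M) := hω
      push_neg at hω'
      exact hω'
    set u := Nat.find hexists with hu
    obtain ⟨huT, huM⟩ := Nat.find_spec hexists
    rw [← hu] at huT huM
    have hmin : ∀ v, v < u → ¬(v ≤ T ∧ M < |X v ω - x₀|) :=
      fun v hv => Nat.find_min hexists hv
    have hGv : ∀ s, s < u → ω ∈ G s := by
      intro s hs
      simp only [hG, Set.mem_setOf_eq]
      intro r hr
      have hrT : r ≤ T := le_trans (le_trans hr (le_of_lt hs)) huT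
      by_contra hcon
      exact hmin r (lt_of_le_of_lt hr hs) ⟨hrT, lt_of_not_ge hcon⟩
    have hu0 : 0 < u := by
      rcases Nat.eq_zero_or_pos u with h0 | h; swap
      · exact h
      rw [h0] at huM
      rw [hX0] at huM
      simp only [sub_self, abs_zero] at huM
      linarith
    have hξsmall : ∀ s, s < u → |ξ (s + 1) ω| ≤ Ξ := by
      intro s hs
      by_contra hcon
      apply hB'
      refine Set.mem_biUnion (Finset.mem_coe.mpr (Finset.mem_range.mpr (lt_of_lt_of_le hs huT))) ?_
      exact ⟨hGv s hs, lt_of_not_ge hcon⟩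
    have hYeq : Y T ω = ∑ s ∈ Finset.range u, Z (s + 1) ω := by
      have hzero : ∀ s ∈ Finset.range T, s ∉ Finset.range u →
          (G s).indicator (Z (s + 1)) ω = 0 := by
        intro s _ hsu
        have hus : u ≤ s := by
          by_contra hc
          exact hsu (Finset.mem_range.mpr (lt_of_not_ge hc))
        have hωG : ω ∉ G s := by
          intro hmem
          have := hmem u hus
          linarith
        exact Set.indicator_of_notMem hωG _
      have hsub : Finset.range u ⊆ Finset.range T := Finset.range_subset_range.mpr huT
      calc Y T ω = ∑ s ∈ Finset.range T, (G s).indicator (Z (s + 1)) ω := rfl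
        _ = ∑ s ∈ Finset.range u, (G s).indicator (Z (s + 1)) ω :=
            (Finset.sum_subset hsub hzero).symm
        _ = ∑ s ∈ Finset.range u, Z (s + 1) ω :=
            Finset.sum_congr rfl fun s hs =>
              Set.indicator_of_mem (hGv s (Finset.mem_range.mp hs)) _
    have hsum : X u ω - x₀ = ∑ s ∈ Finset.range u, (ξ (s + 1) ω + Z (s + 1) ω) := htel ω u
    have hxi : |∑ s ∈ Finset.range u, ξ (s + 1) ω| ≤ (u : ℝ) * Ξ := by
      calc |∑ s ∈ Finset.range u, ξ (s + 1) ω|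
          ≤ ∑ s ∈ Finset.range u, |ξ (s + 1) ω| := Finset.abs_sum_le_sum_abs _ _
        _ ≤ ∑ _s ∈ Finset.range u, Ξ :=
            Finset.sum_le_sum fun s hs => hξsmall s (Finset.mem_range.mp hs)
        _ = (u : ℝ) * Ξ := by rw [Finset.sum_const, Finset.card_range, nsmul_eq_mul]
    have hdecomp : Y T ω = (X u ω - x₀) - ∑ s ∈ Finset.range u, ξ (s + 1) ω := by
      rw [hYeq, hsum, Finset.sum_add_distrib]; ring
    have h1 : |X u ω - x₀| - |∑ s ∈ Finset.range u, ξ (s + 1) ω| ≤ |Y T ω| := by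
      rw [hdecomp]
      exact abs_sub_abs_le_abs_sub _ _
    have huΞ : (u : ℝ) * Ξ ≤ (T : ℝ) * Ξ := by
      have hc : (u : ℝ) ≤ (T : ℝ) := Nat.cast_le.mpr huT
      nlinarith
    show lam ≤ |Y T ω|
    linarith
  -- assemble the measure bounds
  have hAmeas : MeasurableSet (G T) := hGm0 T
  have hb1 : μ (⋃ t ∈ Finset.range T, (G t ∩ Bad t)) ≤ ENNReal.ofReal ((T : ℝ) * δξ) := by
    refine le_trans (measure_biUnion_finset_le _ _) ?_
    calc ∑ t ∈ Finset.range T, μ (G t ∩ Bad t)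
        ≤ ∑ t ∈ Finset.range T, ENNReal.ofReal δξ :=
          Finset.sum_le_sum fun t htr => hBbound t (Finset.mem_range.mp htr)
      _ = (T : ENNReal) * ENNReal.ofReal δξ := by
          rw [Finset.sum_const, Finset.card_range, nsmul_eq_mul]
      _ = ENNReal.ofReal ((T : ℝ) * δξ) := by
          rw [ENNReal.ofReal_mul (by positivity : (0 : ℝ) ≤ (T : ℝ)), ENNReal.ofReal_natCast]
  have hcompl : μ ((G T)ᶜ) ≤ ENNReal.ofReal ((T : ℝ) * δξ + δ) := by
    refine le_trans (measure_mono hincl) ?_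
    refine le_trans (measure_union_le _ _) ?_
    rw [ENNReal.ofReal_add (by positivity) (le_of_lt hδ0)]
    exact add_le_add hb1 hCheb
  have hone : (1 : ENNReal) ≤ μ (G T) + ENNReal.ofReal ((T : ℝ) * δξ + δ) :=
    calc (1 : ENNReal) = μ Set.univ := measure_univ.symm
      _ = μ (G T) + μ ((G T)ᶜ) := (measure_add_measure_compl hAmeas).symm
      _ ≤ μ (G T) + ENNReal.ofReal ((T : ℝ) * δξ + δ) := add_le_add_right hcompl _
  show ENNReal.ofReal (1 - (T : ℝ) * δξ - δ) ≤ μ (G T)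
  have harith : 1 - (T : ℝ) * δξ - δ = 1 - ((T : ℝ) * δξ + δ) := by ring
  rw [harith, ENNReal.ofReal_sub _ (by positivity), ENNReal.ofReal_one]
  exact tsub_le_iff_right.mpr hone

end
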